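/- Let k ≥ 1 and n : Fin k → ℕ with n i ≥ 1 for all i, and let M be the monoid whose elements are pairs (m, p) with p : Fin k → ℕ and m < n^p (where n^p := ∏ i, (n i)^(p i)), with multiplication (m,p)(m',p') = (m + n^p·m', p + p'). Then every nonempty constructible right ideal of M is a finite union of principal right ideals of a common degree: for every nonempty X ∈ 𝒥(M) there exist p : Fin k → ℕ and a nonempty finite set S ⊆ {0, 1, …, n^p − 1} such that X = ⋃_{m ∈ S} (m,p)·M. -/

import Mathlib

/-- The underlying set of the single-vertex `k`-graph of the standard product of
odometers: pairs `(m, p)` with `p : Fin k → ℕ` and `m < n^p := ∏ i, (n i)^(p i)`. -/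
def Odo (k : ℕ) (n : Fin k → ℕ) : Type :=
  { x : ℕ × (Fin k → ℕ) // x.1 < ∏ i, (n i) ^ (x.2 i) }

/-- Multiplication `(m,p)(m',p') = (m + n^p·m', p + p')` on `Odo k n`. -/
def odoMul {k : ℕ} (n : Fin k → ℕ) (x y : Odo k n) : Odo k n :=
  ⟨(x.val.1 + (∏ i, (n i) ^ (x.val.2 i)) * y.val.1, fun i => x.val.2 i + y.val.2 i), by
    have hx := x.property
    have hy := y.property
    have hsplit : (∏ i, (n i) ^ (x.val.2 i + y.val.2 i)) =
        (∏ i, (n i) ^ (x.val.2 i)) * ∏ i, (n i) ^ (y.val.2 i) := by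
      rw [← Finset.prod_mul_distrib]
      exact Finset.prod_congr rfl fun i _ => pow_add _ _ _
    calc x.val.1 + (∏ i, (n i) ^ (x.val.2 i)) * y.val.1
        < (∏ i, (n i) ^ (x.val.2 i)) + (∏ i, (n i) ^ (x.val.2 i)) * y.val.1 :=
          Nat.add_lt_add_right hx _
      _ = (∏ i, (n i) ^ (x.val.2 i)) * (y.val.1 + 1) := by ring
      _ ≤ (∏ i, (n i) ^ (x.val.2 i)) * ∏ i, (n i) ^ (y.val.2 i) :=
          Nat.mul_le_mul_left _ hy
      _ = ∏ i, (n i) ^ (x.val.2 i + y.val.2 i) := hsplit.symm⟩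

/-- The identity `(0, 0)` of `Odo k n`. -/
def odoOne (k : ℕ) (n : Fin k → ℕ) : Odo k n :=
  ⟨(0, fun _ => 0), by simp⟩

/-- The set of constructible right ideals of a monoid-like multiplication `mul` on `P`:
`∅` together with all sets `p₁⁻¹q₁ ⋯ pₙ⁻¹qₙ P` (operations applied from right to left),
where `qX` is the image of `X` under left multiplication by `q` and
`p⁻¹X = {x : px ∈ X}`.  (The full set `P` itself arises from `n = 1`, `p = q = 1`.) -/
def constructibles {P : Type*} (mul : P → P → P) : Set (Set P) :=
  insert ∅
    { X | ∃ l : List (P × P),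
        X = l.foldr (fun pq Y => {x | mul pq.1 x ∈ (fun y => mul pq.2 y) '' Y}) Set.univ }

section OdoAux

variable {k : ℕ} {n : Fin k → ℕ}

lemma prodN_split (p q : Fin k → ℕ) :
    (∏ i, (n i) ^ (p i + q i)) = (∏ i, (n i) ^ (p i)) * ∏ i, (n i) ^ (q i) := by
  rw [← Finset.prod_mul_distrib]
  exact Finset.prod_congr rfl fun i _ => pow_add _ _ _

lemma prodN_pos (hn : ∀ i, 1 ≤ n i) (p : Fin k → ℕ) : 0 < ∏ i, (n i) ^ (p i) :=
  Finset.prod_pos fun i _ => pow_pos (hn i) _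

lemma odoMul_snd (x y : Odo k n) (i : Fin k) :
    (odoMul n x y).val.2 i = x.val.2 i + y.val.2 i := rfl

lemma odoMul_assoc (a b c : Odo k n) :
    odoMul n (odoMul n a b) c = odoMul n a (odoMul n b c) := by
  apply Subtype.ext
  apply Prod.ext
  · show (a.val.1 + (∏ i, (n i) ^ (a.val.2 i)) * b.val.1)
        + (∏ i, (n i) ^ (a.val.2 i + b.val.2 i)) * c.val.1
      = a.val.1 + (∏ i, (n i) ^ (a.val.2 i)) *
          (b.val.1 + (∏ i, (n i) ^ (b.val.2 i)) * c.val.1)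
    rw [prodN_split]; ring
  · funext i; exact add_assoc _ _ _

lemma odoOne_mul (z : Odo k n) : odoMul n (odoOne k n) z = z := by
  apply Subtype.ext
  apply Prod.ext
  · show 0 + (∏ i, (n i) ^ (0 : ℕ)) * z.val.1 = z.val.1
    simp
  · funext i; exact zero_add _

lemma mem_range_odoMul (y x : Odo k n) :
    x ∈ Set.range (odoMul n y) ↔
      (∀ i, y.val.2 i ≤ x.val.2 i) ∧
        x.val.1 % (∏ i, (n i) ^ (y.val.2 i)) = y.val.1 := by
  constructor
  · rintro ⟨w, rfl⟩
    refine ⟨fun i => Nat.le_add_right _ _, ?_⟩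
    show (y.val.1 + (∏ i, (n i) ^ (y.val.2 i)) * w.val.1) % (∏ i, (n i) ^ (y.val.2 i))
        = y.val.1
    rw [Nat.add_mul_mod_self_left, Nat.mod_eq_of_lt y.property]
  · rintro ⟨hdeg, hmod⟩
    have hx := x.property
    have hsplit : (∏ i, (n i) ^ (x.val.2 i)) =
        (∏ i, (n i) ^ (y.val.2 i)) * ∏ i, (n i) ^ (x.val.2 i - y.val.2 i) := by
      rw [← prodN_split]
      exact Finset.prod_congr rfl fun i _ => by
        rw [Nat.add_sub_cancel' (hdeg i)]
    have hpos : 0 < ∏ i, (n i) ^ (y.val.2 i) :=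
      Nat.lt_of_le_of_lt (Nat.zero_le _) y.property
    have hwlt : x.val.1 / (∏ i, (n i) ^ (y.val.2 i)) <
        ∏ i, (n i) ^ (x.val.2 i - y.val.2 i) := by
      rw [Nat.div_lt_iff_lt_mul hpos]
      calc x.val.1 < ∏ i, (n i) ^ (x.val.2 i) := hx
        _ = (∏ i, (n i) ^ (x.val.2 i - y.val.2 i)) * ∏ i, (n i) ^ (y.val.2 i) := by
            rw [hsplit]; ring
    refine ⟨⟨(x.val.1 / (∏ i, (n i) ^ (y.val.2 i)), fun i => x.val.2 i - y.val.2 i),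
      hwlt⟩, ?_⟩
    apply Subtype.ext
    apply Prod.ext
    · show y.val.1 + (∏ i, (n i) ^ (y.val.2 i)) *
          (x.val.1 / (∏ i, (n i) ^ (y.val.2 i))) = x.val.1
      have := Nat.div_add_mod x.val.1 (∏ i, (n i) ^ (y.val.2 i))
      omega
    · funext i
      show y.val.2 i + (x.val.2 i - y.val.2 i) = x.val.2 i
      have := hdeg i; omega

lemma odo_key (hn : ∀ i, 1 ≤ n i) (a y z : Odo k n)
    (h : odoMul n a z ∈ Set.range (odoMul n y)) :
    ∃ c : Odo k n, c.val.2 = (fun i => y.val.2 i - a.val.2 i) ∧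
      odoMul n a c ∈ Set.range (odoMul n y) ∧ z ∈ Set.range (odoMul n c) := by
  obtain ⟨hdeg, hmod⟩ := (mem_range_odoMul y _).mp h
  have hNr : 0 < ∏ i, (n i) ^ (y.val.2 i - a.val.2 i) := prodN_pos hn _
  refine ⟨⟨(z.val.1 % ∏ i, (n i) ^ (y.val.2 i - a.val.2 i),
      fun i => y.val.2 i - a.val.2 i), Nat.mod_lt _ hNr⟩, rfl, ?_, ?_⟩
  · rw [mem_range_odoMul]
    constructor
    · intro i
      show y.val.2 i ≤ a.val.2 i + (y.val.2 i - a.val.2 i)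
      have h1 : y.val.2 i ≤ a.val.2 i + z.val.2 i := hdeg i
      omega
    · show (a.val.1 + (∏ i, (n i) ^ (a.val.2 i)) *
          (z.val.1 % ∏ i, (n i) ^ (y.val.2 i - a.val.2 i)))
          % (∏ i, (n i) ^ (y.val.2 i)) = y.val.1
      have hmod' : (a.val.1 + (∏ i, (n i) ^ (a.val.2 i)) * z.val.1)
          % (∏ i, (n i) ^ (y.val.2 i)) = y.val.1 := hmod
      have hdvd : (∏ i, (n i) ^ (y.val.2 i)) ∣
          (∏ i, (n i) ^ (a.val.2 i)) * ∏ i, (n i) ^ (y.val.2 i - a.val.2 i) := by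
        rw [← prodN_split]
        refine Finset.prod_dvd_prod_of_dvd _ _ fun i _ => ?_
        exact pow_dvd_pow _ (by have := hdeg i; omega)
      obtain ⟨t, ht⟩ := hdvd
      have hexp : a.val.1 + (∏ i, (n i) ^ (a.val.2 i)) * z.val.1 =
          (a.val.1 + (∏ i, (n i) ^ (a.val.2 i)) *
            (z.val.1 % ∏ i, (n i) ^ (y.val.2 i - a.val.2 i)))
          + (∏ i, (n i) ^ (y.val.2 i)) *
            (t * (z.val.1 / ∏ i, (n i) ^ (y.val.2 i - a.val.2 i))) := by
        calc a.val.1 + (∏ i, (n i) ^ (a.val.2 i)) * z.val.1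
            = a.val.1 + (∏ i, (n i) ^ (a.val.2 i)) *
                ((z.val.1 % ∏ i, (n i) ^ (y.val.2 i - a.val.2 i))
                 + (∏ i, (n i) ^ (y.val.2 i - a.val.2 i)) *
                    (z.val.1 / ∏ i, (n i) ^ (y.val.2 i - a.val.2 i))) := by
              rw [Nat.mod_add_div]
          _ = (a.val.1 + (∏ i, (n i) ^ (a.val.2 i)) *
                (z.val.1 % ∏ i, (n i) ^ (y.val.2 i - a.val.2 i)))
              + ((∏ i, (n i) ^ (a.val.2 i)) * ∏ i, (n i) ^ (y.val.2 i - a.val.2 i))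
                * (z.val.1 / ∏ i, (n i) ^ (y.val.2 i - a.val.2 i)) := by ring
          _ = _ := by rw [ht]; ring
      rw [hexp, Nat.add_mul_mod_self_left] at hmod'
      exact hmod'
  · apply (mem_range_odoMul _ _).mpr
    refine ⟨fun i => ?_, rfl⟩
    show y.val.2 i - a.val.2 i ≤ z.val.2 i
    have h1 : y.val.2 i ≤ a.val.2 i + z.val.2 i := hdeg i
    omega

lemma odo_image_range (b x : Odo k n) :
    (fun y => odoMul n b y) '' Set.range (odoMul n x)
      = Set.range (odoMul n (odoMul n b x)) := by
  rw [← Set.range_comp]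
  have h : ((fun y => odoMul n b y) ∘ odoMul n x) = odoMul n (odoMul n b x) :=
    funext fun w => (odoMul_assoc b x w).symm
  rw [h]

lemma odo_foldr_shape (hn : ∀ i, 1 ≤ n i) (l : List (Odo k n × Odo k n)) :
    l.foldr (fun pq Y => {x | odoMul n pq.1 x ∈ (fun y => odoMul n pq.2 y) '' Y})
        Set.univ = ∅ ∨
      ∃ (p : Fin k → ℕ) (S : Set (Odo k n)), S.Finite ∧
        (∀ x ∈ S, x.val.2 = p) ∧
        l.foldr (fun pq Y => {x | odoMul n pq.1 x ∈ (fun y => odoMul n pq.2 y) '' Y})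
          Set.univ = ⋃ x ∈ S, Set.range (odoMul n x) := by
  induction l with
  | nil =>
    right
    refine ⟨fun _ => 0, {odoOne k n}, Set.finite_singleton _, ?_, ?_⟩
    · rintro x rfl; rfl
    · simp only [List.foldr_nil, Set.mem_singleton_iff, Set.iUnion_iUnion_eq_left]
      ext z
      simp only [Set.mem_univ, Set.mem_range, true_iff]
      exact ⟨z, odoOne_mul z⟩
  | cons ab l ih =>
    obtain ⟨a, b⟩ := ab
    simp only [List.foldr_cons]
    rcases ih with h0 | ⟨p, S, hfin, hdeg, hXeq⟩
    · left
      rw [h0]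
      ext z
      simp
    · rw [hXeq]
      have hY : (fun y => odoMul n b y) '' (⋃ x ∈ S, Set.range (odoMul n x))
          = ⋃ x ∈ S, Set.range (odoMul n (odoMul n b x)) := by
        rw [Set.image_iUnion₂]
        exact Set.iUnion₂_congr fun x _ => odo_image_range b x
      right
      refine ⟨fun i => (b.val.2 i + p i) - a.val.2 i,
        {c : Odo k n | c.val.2 = (fun i => (b.val.2 i + p i) - a.val.2 i) ∧
          odoMul n a c ∈ ⋃ x ∈ S, Set.range (odoMul n (odoMul n b x))}, ?_, ?_, ?_⟩
      · have hfin' :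
            ({c : Odo k n | c.val.2 = fun i => (b.val.2 i + p i) - a.val.2 i}).Finite := by
          apply Set.Finite.of_finite_image (f := fun c => c.val.1)
          · apply (Set.finite_Iio (∏ i, (n i) ^ ((b.val.2 i + p i) - a.val.2 i))).subset
            rintro _ ⟨c, hc, rfl⟩
            have hcp := c.property
            rw [hc] at hcp
            exact hcp
          · intro c hc d hd hcd
            apply Subtype.ext
            apply Prod.ext hcd (hc.trans hd.symm)
        exact hfin'.subset fun c hc => hc.1
      · exact fun c hc => hc.1
      · ext z
        simp only [Set.mem_setOf_eq, hY, Set.mem_iUnion]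
        constructor
        · rintro ⟨x, hx, hzx⟩
          obtain ⟨c, hcdeg, hac, hzc⟩ := odo_key hn a (odoMul n b x) z hzx
          have hcr : c.val.2 = fun i => (b.val.2 i + p i) - a.val.2 i := by
            rw [hcdeg]
            funext i
            show (odoMul n b x).val.2 i - a.val.2 i = (b.val.2 i + p i) - a.val.2 i
            rw [odoMul_snd, hdeg x hx]
          exact ⟨c, ⟨hcr, ⟨x, hx, hac⟩⟩, hzc⟩
        · rintro ⟨c, ⟨hcr, hac⟩, hzc⟩
          obtain ⟨x, hx, hacx⟩ := hac
          obtain ⟨w, rfl⟩ := hzc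
          obtain ⟨u, hu⟩ := hacx
          refine ⟨x, hx, ⟨odoMul n u w, ?_⟩⟩
          rw [← odoMul_assoc, hu, odoMul_assoc, ← odoMul_assoc a c w]

end OdoAux

/-- Every nonempty constructible right ideal of the monoid `Odo k n` is a finite union
of principal right ideals of a common degree: there are `p : Fin k → ℕ` and a nonempty
finite set `S` of elements, all of degree `p`, with `X = ⋃_{x ∈ S} x·M`. -/
theorem odo_constructible_eq_union_principal (k : ℕ) (hk : 1 ≤ k)
    (n : Fin k → ℕ) (hn : ∀ i, 1 ≤ n i) :
    ∀ X ∈ constructibles (odoMul n), X.Nonempty →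
      ∃ (p : Fin k → ℕ) (S : Set (Odo k n)), S.Finite ∧ S.Nonempty ∧
        (∀ x ∈ S, x.val.2 = p) ∧ X = ⋃ x ∈ S, Set.range (odoMul n x) := by
  intro X hX hne
  rw [constructibles, Set.mem_insert_iff] at hX
  rcases hX with rfl | ⟨l, rfl⟩
  · exact absurd hne (by simp)
  · rcases odo_foldr_shape hn l with h0 | ⟨p, S, hfin, hdeg, hXeq⟩
    · rw [h0] at hne
      exact absurd hne (by simp)
    · obtain ⟨z, hz⟩ := hne
      rw [hXeq] at hz
      obtain ⟨x, hx, -⟩ := Set.mem_iUnion₂.mp hz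
      exact ⟨p, S, hfin, ⟨x, hx⟩, hdeg, hXeq⟩
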